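/- An arrowed daisy graph is gradable if and only if it has no grade-obstructing loop and, for every pair of edges e and f, all paths from e to f have the same grading difference. -/

import Mathlib

/-!
Model of a daisy graph (DG): finite vertex set `V`, finite edge set `E`, darts
`D = E × Bool` with an endpoint map.  Every vertex has degree 1 or 6; at each
degree-6 vertex ("triple value") the six darts are partitioned into three
unordered pairs ("consecutive pairs"), encoded by a fixed-point-free
endpoint-preserving involution `mate` on the darts at that vertex.
An arrowed daisy graph (ADG) additionally selects, in each consecutive pair,
exactly one preferred dart (`pref`).
-/
structure ADG (V E : Type) [Fintype V] [DecidableEq V] [Fintype E] where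
  /-- the endpoint of each dart -/
  endpoint : E × Bool → V
  /-- the other dart of the consecutive pair of a dart (at triple values) -/
  mate : E × Bool → E × Bool
  /-- the preferred-dart choice: `pref d = true` means `d` is preferred -/
  pref : E × Bool → Bool
  /-- every vertex has degree 1 or 6 -/
  degree_cond : ∀ w : V,
      (Finset.univ.filter fun d : E × Bool => endpoint d = w).card = 1 ∨
      (Finset.univ.filter fun d : E × Bool => endpoint d = w).card = 6
  mate_endpoint : ∀ d, endpoint (mate d) = endpoint d
  mate_invol : ∀ d, mate (mate d) = d
  /-- at a triple value, `mate` is fixed-point free: it pairs the six darts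
  into three consecutive pairs -/
  mate_ne : ∀ d, (Finset.univ.filter fun d' : E × Bool =>
      endpoint d' = endpoint d).card = 6 → mate d ≠ d
  /-- at a degree-1 vertex there are no consecutive pairs -/
  mate_fix : ∀ d, (Finset.univ.filter fun d' : E × Bool =>
      endpoint d' = endpoint d).card = 1 → mate d = d
  /-- in each consecutive pair exactly one dart is preferred -/
  pref_pair : ∀ d, (Finset.univ.filter fun d' : E × Bool =>
      endpoint d' = endpoint d).card = 6 → pref d = !pref (mate d)

variable {V E : Type} [Fintype V] [DecidableEq V] [Fintype E]

/-- A triple value is a vertex of degree 6. -/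
def ADG.IsTriple (G : ADG V E) (w : V) : Prop :=
  (Finset.univ.filter fun d : E × Bool => G.endpoint d = w).card = 6

/-- The edge `e` is preferred at the vertex `w`: some dart of `e` with
endpoint `w` is preferred. -/
def ADG.PreferredAt (G : ADG V E) (e : E) (w : V) : Prop :=
  ∃ b : Bool, G.endpoint (e, b) = w ∧ G.pref (e, b) = true

/-- The edge `e` is non-preferred at the vertex `w`: some dart of `e` with
endpoint `w` is not preferred. -/
def ADG.NonPreferredAt (G : ADG V E) (e : E) (w : V) : Prop :=
  ∃ b : Bool, G.endpoint (e, b) = w ∧ G.pref (e, b) = false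

/-- A grading: at each triple value `w` there is `a(w) : ℤ` with the preferred
edges at `w` graded `a(w) + 1` and the non-preferred ones graded `a(w)`. -/
def ADG.IsGrading (G : ADG V E) (g : E → ℤ) : Prop :=
  ∀ w : V, G.IsTriple w → ∃ a : ℤ,
    (∀ e : E, G.PreferredAt e w → g e = a + 1) ∧
    (∀ e : E, G.NonPreferredAt e w → g e = a)

/-- A grade-obstructing loop: an edge whose two darts have the same endpoint,
one dart preferred and the other non-preferred. -/
def ADG.GradeObstructingLoop (G : ADG V E) (e : E) : Prop :=
  ∃ w : V, G.endpoint (e, false) = w ∧ G.endpoint (e, true) = w ∧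
    G.pref (e, false) ≠ G.pref (e, true)

/-- A path `e₀, w₀, e₁, w₁, …, w_{r-1}, e_r`: each intermediate vertex `wₖ` is
the endpoint of a dart of `eₖ` and of a dart of `e_{k+1}`. -/
def ADG.IsPath (G : ADG V E) (r : ℕ) (es : Fin (r + 1) → E) (ws : Fin r → V) :
    Prop :=
  ∀ k : Fin r, (∃ b : Bool, G.endpoint (es k.castSucc, b) = ws k) ∧
    (∃ b : Bool, G.endpoint (es k.succ, b) = ws k)

open Classical in
/-- The grading difference `Δg(e, w, f)`: it is `1` if `f` is preferred at `w`
and `e` is not, `-1` if `e` is preferred at `w` and `f` is not, and `0`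
otherwise. -/
noncomputable def ADG.gradeDiff (G : ADG V E) (e : E) (w : V) (f : E) : ℤ :=
  (if G.PreferredAt f w then 1 else 0) - (if G.PreferredAt e w then 1 else 0)

/-- The grading difference of a path: the sum of the grading differences
`Δg(e_{k-1}, w_{k-1}, e_k)`. -/
noncomputable def ADG.pathDiff (G : ADG V E) (r : ℕ) (es : Fin (r + 1) → E)
    (ws : Fin r → V) : ℤ :=
  ∑ k : Fin r, G.gradeDiff (es k.castSucc) (ws k) (es k.succ)

section Aux

open Classical

variable {V E : Type} [Fintype V] [DecidableEq V] [Fintype E]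

/-- Reachability between edges via paths. -/
def ADG.Reach (G : ADG V E) (x e : E) : Prop :=
  ∃ (r : ℕ) (es : Fin (r + 1) → E) (ws : Fin r → V),
    G.IsPath r es ws ∧ es 0 = x ∧ es (Fin.last r) = e

lemma ADG.reach_refl (G : ADG V E) (e : E) : G.Reach e e :=
  ⟨0, fun _ => e, Fin.elim0, fun k => k.elim0, rfl, rfl⟩

lemma ADG.snoc_path (G : ADG V E) {r : ℕ} {es : Fin (r + 1) → E} {ws : Fin r → V}
    (hp : G.IsPath r es ws) {w : V} {f : E}
    (h1 : ∃ b, G.endpoint (es (Fin.last r), b) = w)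
    (h2 : ∃ b, G.endpoint (f, b) = w) :
    G.IsPath (r + 1) (Fin.snoc es f) (Fin.snoc ws w) := by
  intro k
  refine Fin.lastCases ?_ ?_ k
  · constructor
    · simpa [Fin.snoc_castSucc, Fin.snoc_last] using h1
    · simpa [Fin.succ_last, Fin.snoc_last] using h2
  · intro j
    obtain ⟨hj1, hj2⟩ := hp j
    constructor
    · simpa [Fin.snoc_castSucc] using hj1
    · simpa only [Fin.succ_castSucc, Fin.snoc_castSucc] using hj2

lemma ADG.snoc_pathDiff (G : ADG V E) {r : ℕ} (es : Fin (r + 1) → E) (ws : Fin r → V)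
    (w : V) (f : E) :
    G.pathDiff (r + 1) (Fin.snoc es f) (Fin.snoc ws w)
      = G.pathDiff r es ws + G.gradeDiff (es (Fin.last r)) w f := by
  unfold ADG.pathDiff
  rw [Fin.sum_univ_castSucc]
  congr 1
  · apply Finset.sum_congr rfl
    intro j _
    simp only [Fin.snoc_castSucc, Fin.succ_castSucc]
  · simp [Fin.snoc_castSucc, Fin.snoc_last, Fin.succ_last]

lemma ADG.snoc_zero' (G : ADG V E) {r : ℕ} (es : Fin (r + 1) → E) (f : E) :
    (Fin.snoc es f : Fin (r + 2) → E) 0 = es 0 := by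
  show (Fin.snoc es f : Fin (r + 2) → E) (Fin.castSucc 0) = es 0
  rw [Fin.snoc_castSucc]

lemma ADG.reach_step (G : ADG V E) {x e : E} (h : G.Reach x e) {w : V} {f : E}
    (he : ∃ b, G.endpoint (e, b) = w) (hf : ∃ b, G.endpoint (f, b) = w) :
    G.Reach x f := by
  obtain ⟨r, es, ws, hp, h0, hl⟩ := h
  refine ⟨r + 1, Fin.snoc es f, Fin.snoc ws w,
    G.snoc_path hp (by rw [hl]; exact he) hf, ?_, ?_⟩
  · rw [G.snoc_zero']; exact h0
  · simp

lemma ADG.gradeDiff_grading (G : ADG V E) {g : E → ℤ} (hg : G.IsGrading g)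
    {e f : E} {w : V}
    (he : ∃ b, G.endpoint (e, b) = w) (hf : ∃ b, G.endpoint (f, b) = w) :
    G.gradeDiff e w f = g f - g e := by
  obtain ⟨b1, hb1⟩ := he
  obtain ⟨b2, hb2⟩ := hf
  rcases G.degree_cond w with h1 | h6
  · -- degree 1: the two darts coincide, so e = f
    obtain ⟨d, hd⟩ := Finset.card_eq_one.mp h1
    have m1 : (e, b1) ∈ Finset.univ.filter fun d : E × Bool => G.endpoint d = w := by
      simp [hb1]
    have m2 : (f, b2) ∈ Finset.univ.filter fun d : E × Bool => G.endpoint d = w := by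
      simp [hb2]
    rw [hd, Finset.mem_singleton] at m1 m2
    have hef : e = f := by rw [show e = d.1 from congrArg Prod.fst m1,
      show f = d.1 from congrArg Prod.fst m2]
    subst hef
    simp [ADG.gradeDiff]
  · obtain ⟨a, hP, hN⟩ := hg w h6
    have key : ∀ (x : E) (b : Bool), G.endpoint (x, b) = w →
        g x = a + (if G.PreferredAt x w then 1 else 0) := by
      intro x b hb
      by_cases hx : G.PreferredAt x w
      · rw [hP x hx]; simp [hx]
      · have hpb : G.pref (x, b) = false := by
          cases hpb : G.pref (x, b)
          · rfl
          · exact absurd ⟨b, hb, hpb⟩ hx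
        rw [hN x ⟨b, hb, hpb⟩]; simp [hx]
    rw [key e b1 hb1, key f b2 hb2]
    unfold ADG.gradeDiff
    ring

lemma ADG.pathDiff_grading (G : ADG V E) {g : E → ℤ} (hg : G.IsGrading g) :
    ∀ (r : ℕ) (es : Fin (r + 1) → E) (ws : Fin r → V), G.IsPath r es ws →
      G.pathDiff r es ws = g (es (Fin.last r)) - g (es 0) := by
  intro r
  induction r with
  | zero =>
      intro es ws _
      simp [ADG.pathDiff, Fin.last]
  | succ r ih =>
      intro es ws hp
      have hp' : G.IsPath r (es ∘ Fin.castSucc) (ws ∘ Fin.castSucc) := by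
        intro k
        obtain ⟨h1, h2⟩ := hp k.castSucc
        constructor
        · exact h1
        · obtain ⟨b, hb⟩ := h2
          refine ⟨b, ?_⟩
          rw [Function.comp_apply, ← Fin.succ_castSucc]
          exact hb
      have hIH := ih (es ∘ Fin.castSucc) (ws ∘ Fin.castSucc) hp'
      have hsplit : G.pathDiff (r + 1) es ws
          = G.pathDiff r (es ∘ Fin.castSucc) (ws ∘ Fin.castSucc)
            + G.gradeDiff (es (Fin.last r).castSucc) (ws (Fin.last r)) (es (Fin.last r).succ) := by
        unfold ADG.pathDiff
        rw [Fin.sum_univ_castSucc]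
        congr 1
      obtain ⟨h1, h2⟩ := hp (Fin.last r)
      have hlast := G.gradeDiff_grading hg h1 h2
      rw [hsplit, hIH, hlast]
      have e0 : (es ∘ Fin.castSucc) 0 = es 0 := by
        simp
      have el : (es ∘ Fin.castSucc) (Fin.last r) = es (Fin.last r).castSucc := rfl
      rw [e0, el]
      have : (Fin.last r).succ = Fin.last (r + 1) := Fin.succ_last r
      rw [this]
      ring

open Classical in
/-- The grading difference along some chosen path from `x` to `e`. -/
noncomputable def ADG.reachDiff (G : ADG V E) (x e : E) : ℤ :=
  if h : G.Reach x e then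
    G.pathDiff h.choose h.choose_spec.choose h.choose_spec.choose_spec.choose
  else 0

lemma ADG.reachDiff_spec (G : ADG V E) {x e : E} (h : G.Reach x e) :
    ∃ (r : ℕ) (es : Fin (r + 1) → E) (ws : Fin r → V),
      G.IsPath r es ws ∧ es 0 = x ∧ es (Fin.last r) = e ∧
      G.reachDiff x e = G.pathDiff r es ws := by
  refine ⟨h.choose, h.choose_spec.choose, h.choose_spec.choose_spec.choose,
    h.choose_spec.choose_spec.choose_spec.1,
    h.choose_spec.choose_spec.choose_spec.2.1,
    h.choose_spec.choose_spec.choose_spec.2.2, ?_⟩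
  unfold ADG.reachDiff
  rw [dif_pos h]

open Classical in
/-- A canonical basepoint in the reachability class of an edge. -/
noncomputable def ADG.pivot (G : ADG V E) (e : E) : E :=
  (Fintype.equivFin E).symm
    (((Finset.univ.filter fun x => G.Reach x e).image (Fintype.equivFin E)).min'
      ⟨Fintype.equivFin E e, Finset.mem_image_of_mem _
        (Finset.mem_filter.mpr ⟨Finset.mem_univ _, G.reach_refl e⟩)⟩)

lemma ADG.pivot_reach (G : ADG V E) (e : E) : G.Reach (G.pivot e) e := by
  unfold ADG.pivot
  obtain ⟨x, hx, hxe⟩ := Finset.mem_image.mp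
    (Finset.min'_mem ((Finset.univ.filter fun x => G.Reach x e).image (Fintype.equivFin E)) _)
  refine (congrArg (fun y => G.Reach y e) ((Fintype.equivFin E).symm_apply_eq.mpr hxe.symm)).mpr ?_
  exact (Finset.mem_filter.mp hx).2

lemma ADG.pivot_congr (G : ADG V E) {e f : E}
    (h : ∀ x, G.Reach x e ↔ G.Reach x f) : G.pivot e = G.pivot f := by
  have hset : (Finset.univ.filter fun x => G.Reach x e)
      = (Finset.univ.filter fun x => G.Reach x f) := by
    ext x
    simp only [Finset.mem_filter, Finset.mem_univ, true_and]
    exact h x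
  unfold ADG.pivot
  simp only [hset]

end Aux


/-- An arrowed daisy graph is gradable iff it has no
grade-obstructing loop and, for every pair of edges `e` and `f`, all paths
from `e` to `f` have the same grading difference. -/
theorem gradable_iff_no_loop_and_path_independent (G : ADG V E) :
    (∃ g : E → ℤ, G.IsGrading g) ↔
      ((¬ ∃ e : E, G.GradeObstructingLoop e) ∧
        ∀ (e f : E) (r₁ r₂ : ℕ)
          (es₁ : Fin (r₁ + 1) → E) (ws₁ : Fin r₁ → V)
          (es₂ : Fin (r₂ + 1) → E) (ws₂ : Fin r₂ → V),
          G.IsPath r₁ es₁ ws₁ → G.IsPath r₂ es₂ ws₂ →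
          es₁ 0 = e → es₁ (Fin.last r₁) = f →
          es₂ 0 = e → es₂ (Fin.last r₂) = f →
          G.pathDiff r₁ es₁ ws₁ = G.pathDiff r₂ es₂ ws₂) := by
  classical
  constructor
  · rintro ⟨g, hg⟩
    constructor
    · rintro ⟨e, w, h0, h1, hne⟩
      have h6 : G.IsTriple w := by
        rcases G.degree_cond w with h | h
        · exfalso
          have hlt : 1 < (Finset.univ.filter fun d : E × Bool => G.endpoint d = w).card := by
            apply Finset.one_lt_card.mpr
            exact ⟨(e, false), by simp [h0], (e, true), by simp [h1], by simp⟩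
          omega
        · exact h
      obtain ⟨a, hP, hN⟩ := hg w h6
      have hcontr : g e = a + 1 ∧ g e = a := by
        cases hb : G.pref (e, false) <;> cases hb' : G.pref (e, true)
        · exact absurd (hb.trans hb'.symm) hne
        · exact ⟨hP e ⟨true, h1, hb'⟩, hN e ⟨false, h0, hb⟩⟩
        · exact ⟨hP e ⟨false, h0, hb⟩, hN e ⟨true, h1, hb'⟩⟩
        · exact absurd (hb.trans hb'.symm) hne
      omega
    · intro e f r1 r2 es1 ws1 es2 ws2 hp1 hp2 ha1 hb1 ha2 hb2
      rw [G.pathDiff_grading hg r1 es1 ws1 hp1, G.pathDiff_grading hg r2 es2 ws2 hp2,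
        ha1, hb1, ha2, hb2]
  · rintro ⟨hloop, H⟩
    -- key step lemma
    have key : ∀ (x e : E) (w : V) (f : E), G.Reach x e →
        (∃ b, G.endpoint (e, b) = w) → (∃ b, G.endpoint (f, b) = w) →
        G.reachDiff x f = G.reachDiff x e + G.gradeDiff e w f := by
      intro x e w f hxe he hf
      obtain ⟨r1, es1, ws1, hp1, h01, hl1, hd1⟩ := G.reachDiff_spec hxe
      have hxf := G.reach_step hxe he hf
      obtain ⟨r2, es2, ws2, hp2, h02, hl2, hd2⟩ := G.reachDiff_spec hxf
      have hp1' : G.IsPath (r1 + 1) (Fin.snoc es1 f) (Fin.snoc ws1 w) :=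
        G.snoc_path hp1 (by rw [hl1]; exact he) hf
      have hEq := H x f r2 (r1 + 1) es2 ws2 (Fin.snoc es1 f) (Fin.snoc ws1 w)
        hp2 hp1' h02 hl2 (by rw [G.snoc_zero']; exact h01) (by simp)
      rw [hd2, hd1, hEq, G.snoc_pathDiff, hl1]
    have hnotP : ∀ e : E, ∀ w : V, G.NonPreferredAt e w → ¬ G.PreferredAt e w := by
      rintro e w ⟨b2, hb2, hpb2⟩ ⟨b1, hb1, hpb1⟩
      apply hloop
      refine ⟨e, w, ?_⟩
      cases b1 <;> cases b2
      · rw [hpb1] at hpb2; cases hpb2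
      · exact ⟨hb1, hb2, by rw [hpb1, hpb2]; simp⟩
      · exact ⟨hb2, hb1, by rw [hpb2, hpb1]; simp⟩
      · rw [hpb1] at hpb2; cases hpb2
    refine ⟨fun e => G.reachDiff (G.pivot e) e, ?_⟩
    intro w hw
    have hne : (Finset.univ.filter fun d : E × Bool => G.endpoint d = w).Nonempty := by
      rw [← Finset.card_pos, hw]; norm_num
    obtain ⟨d0, hd0⟩ := hne
    have hd0' : G.endpoint d0 = w := (Finset.mem_filter.mp hd0).2
    set e0 : E := d0.1 with he0def
    have he0w : ∃ b, G.endpoint (e0, b) = w := ⟨d0.2, by rw [he0def, Prod.mk.eta]; exact hd0'⟩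
    refine ⟨G.reachDiff (G.pivot e0) e0 - (if G.PreferredAt e0 w then 1 else 0), ?_, ?_⟩
    · intro e hPe
      have hew : ∃ b, G.endpoint (e, b) = w := ⟨hPe.choose, hPe.choose_spec.1⟩
      have hiff : ∀ x, G.Reach x e0 ↔ G.Reach x e :=
        fun x => ⟨fun h => G.reach_step h he0w hew, fun h => G.reach_step h hew he0w⟩
      have hpiv : G.pivot e0 = G.pivot e := G.pivot_congr hiff
      have hkey := key (G.pivot e0) e0 w e (G.pivot_reach e0) he0w hew
      change G.reachDiff (G.pivot e) e = _
      rw [← hpiv, hkey]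
      unfold ADG.gradeDiff
      simp only [if_pos hPe]
      ring
    · intro e hNe
      have hnP : ¬ G.PreferredAt e w := hnotP e w hNe
      have hew : ∃ b, G.endpoint (e, b) = w := ⟨hNe.choose, hNe.choose_spec.1⟩
      have hiff : ∀ x, G.Reach x e0 ↔ G.Reach x e :=
        fun x => ⟨fun h => G.reach_step h he0w hew, fun h => G.reach_step h hew he0w⟩
      have hpiv : G.pivot e0 = G.pivot e := G.pivot_congr hiff
      have hkey := key (G.pivot e0) e0 w e (G.pivot_reach e0) he0w hew
      change G.reachDiff (G.pivot e) e = _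
      rw [← hpiv, hkey]
      unfold ADG.gradeDiff
      simp only [if_neg hnP]
      ring
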